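/- If the joint distribution over V ∪ {Y} is strictly positive and satisfies the composition property, and B is a minimal subset such that Y ⫫̸ X | B for a relevant variable X, then every X' ∈ B satisfies deg(X') < |B| (strict inequality). -/
import Mathlib


/-- For a strictly positive distribution satisfying the composition property
(strict positivity being used through the intersection axiom, which every strictly
positive distribution satisfies), if `B` is a minimal subset with `Y ⫫̸ X | B` for a
relevant variable `X`, then every `X' ∈ B` has degree strictly less than `|B|`:
there exists `B' ⊆ V \ {X'}` with `|B'| < |B|` and `Y ⫫̸ X' | B'`. -/
theorem minimal_conditioning_degree_lt_card_of_PC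
    {ι : Type*} [Fintype ι] [DecidableEq ι]
    (CI : Finset ι → Finset ι → Finset ι → Prop)
    (symm : ∀ S T R, CI S T R → CI T S R)
    (decomp : ∀ S T U R, CI S (T ∪ U) R → CI S T R)
    (weakUnion : ∀ S T U R, CI S (T ∪ U) R → CI S T (R ∪ U))
    (contraction : ∀ S T U R, CI S T R → CI S U (R ∪ T) → CI S (T ∪ U) R)
    (composition : ∀ S T U R, CI S T R → CI S U R → CI S (T ∪ U) R)
    (intersection : ∀ S T U R, CI S T (R ∪ U) → CI S U (R ∪ T) → CI S (T ∪ U) R)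
    (y X : ι) (hXy : X ≠ y)
    (B : Finset ι) (hB : B ⊆ (Finset.univ.erase y).erase X)
    (hdep : ¬ CI {y} {X} B)
    (hmin : ∀ B' ⊂ B, CI {y} {X} B') :
    ∀ X' ∈ B, ∃ B' ⊆ (Finset.univ.erase y).erase X',
      B'.card < B.card ∧ ¬ CI {y} {X'} B' := by
  intro X' hX'
  refine ⟨B.erase X', ?_, Finset.card_erase_lt_of_mem hX', ?_⟩
  · intro a ha
    have haB := Finset.mem_of_mem_erase ha
    have := hB haB
    simp only [Finset.mem_erase] at this ha ⊢
    exact ⟨ha.1, this.2.1, Finset.mem_univ a⟩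
  · intro hci
    have hsub : B.erase X' ⊂ B := Finset.erase_ssubset hX'
    have h1 : CI {y} {X} (B.erase X') := hmin _ hsub
    have h2 : CI {y} ({X} ∪ {X'}) (B.erase X') := composition _ _ _ _ h1 hci
    have h3 : CI {y} {X} (B.erase X' ∪ {X'}) := weakUnion _ _ _ _ h2
    have heq : B.erase X' ∪ {X'} = B := by
      ext a
      simp only [Finset.mem_union, Finset.mem_erase, Finset.mem_singleton]
      constructor
      · rintro (⟨_, h⟩ | rfl) <;> [exact h; exact hX']
      · intro h
        by_cases hax : a = X'
        · exact Or.inr hax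
        · exact Or.inl ⟨hax, h⟩
    rw [heq] at h3
    exact hdep h3
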